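/- Let X be a complex Banach space and T ∈ L(X) a J-class operator, and set A_T := {x ∈ X : J_T(x) = X}. Assume there exists a closed T-invariant subspace M ⊆ A_T such that A_T \ M ≠ ∅. Then the induced operator T̂ on the quotient Banach space X/M, defined by T̂[x] := [Tx], is J-class. -/

import Mathlib

open Filter Topology Metric
open scoped ENNReal

noncomputable section

namespace JClassPaper

variable {X : Type*} [NormedAddCommGroup X] [NormedSpace ℂ X]

/-- The Banach-space adjoint `T* φ = φ ∘ T` of a bounded operator. -/
def adj (T : X →L[ℂ] X) : StrongDual ℂ X →L[ℂ] StrongDual ℂ X :=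
  (ContinuousLinearMap.compL ℂ X X ℂ).flip T

/-- The point spectrum (set of eigenvalues). -/
def pointSpectrum (T : X →L[ℂ] X) : Set ℂ := {z | ∃ x : X, x ≠ 0 ∧ T x = z • x}

/-- `T` is tauberian if `(T**)⁻¹(j_X(X)) ⊆ j_X(X)`. -/
def Tauberian (T : X →L[ℂ] X) : Prop :=
  ∀ F : StrongDual ℂ (StrongDual ℂ X),
    adj (adj T) F ∈ Set.range (NormedSpace.inclusionInDoubleDual ℂ X) →
      F ∈ Set.range (NormedSpace.inclusionInDoubleDual ℂ X)

/-- Fredholm: finite-dimensional kernel, closed range of finite codimension. -/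
def Fredholm (T : X →L[ℂ] X) : Prop :=
  FiniteDimensional ℂ (LinearMap.ker (T : X →ₗ[ℂ] X)) ∧ IsClosed (LinearMap.range (T : X →ₗ[ℂ] X) : Set X) ∧
    FiniteDimensional ℂ (X ⧸ LinearMap.range (T : X →ₗ[ℂ] X))

/-- The essential spectrum. -/
def essSpectrum (T : X →L[ℂ] X) : Set ℂ := {z | ¬ Fredholm (T - z • (1 : X →L[ℂ] X))}

/-- The J-set of `x` under `T`. -/
def JSet (T : X →L[ℂ] X) (x : X) : Set X :=
  {y | ∃ k : ℕ → ℕ, StrictMono k ∧ ∃ u : ℕ → X,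
    Tendsto u atTop (𝓝 x) ∧ Tendsto (fun n => (T ^ k n) (u n)) atTop (𝓝 y)}

/-- The mixing J-set of `x` under `T`. -/
def JMixSet (T : X →L[ℂ] X) (x : X) : Set X :=
  {y | ∃ u : ℕ → X, Tendsto u atTop (𝓝 x) ∧ Tendsto (fun n => (T ^ n) (u n)) atTop (𝓝 y)}

/-- `T` is J-class if `J_T(x) = X` for some `x ≠ 0`. -/
def JClass (T : X →L[ℂ] X) : Prop := ∃ x : X, x ≠ 0 ∧ JSet T x = Set.univ

/-- `T` is J^mix-class if `J^mix_T(x) = X` for some `x ≠ 0`. -/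
def JMixClass (T : X →L[ℂ] X) : Prop := ∃ x : X, x ≠ 0 ∧ JMixSet T x = Set.univ

/-- A Banach space is a Grothendieck space if weak*-null sequences in the dual are weakly null. -/
def Grothendieck (X : Type*) [NormedAddCommGroup X] [NormedSpace ℂ X] : Prop :=
  ∀ φ : ℕ → StrongDual ℂ X,
    (∀ x : X, Tendsto (fun n => φ n x) atTop (𝓝 (0 : ℂ))) →
    ∀ F : StrongDual ℂ (StrongDual ℂ X),
      Tendsto (fun n => F (φ n)) atTop (𝓝 (0 : ℂ))

/-- The surjectivity modulus `s(T) = sup {r ≥ 0 : T(B_X) ⊇ r·B_X}`. -/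
def smod (T : X →L[ℂ] X) : ℝ :=
  sSup {r : ℝ | 0 ≤ r ∧ closedBall (0 : X) r ⊆ T '' closedBall 0 1}

/-- `δ(T) = lim_n s(Tⁿ)^{1/n} = sup_n s(Tⁿ)^{1/n}` (by supermultiplicativity of `s`). -/
def dmod (T : X →L[ℂ] X) : ℝ := ⨆ n : ℕ, smod (T ^ (n + 1)) ^ ((1 : ℝ) / (n + 1))

/-- The injectivity modulus `κ(T) = inf {‖Tx‖ : ‖x‖ = 1}`. -/
def kmod (T : X →L[ℂ] X) : ℝ := sInf {r : ℝ | ∃ x : X, ‖x‖ = 1 ∧ r = ‖T x‖}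

/-- `i(T) = lim_n κ(Tⁿ)^{1/n} = sup_n κ(Tⁿ)^{1/n}` (by supermultiplicativity of `κ`). -/
def imod (T : X →L[ℂ] X) : ℝ := ⨆ n : ℕ, kmod (T ^ (n + 1)) ^ ((1 : ℝ) / (n + 1))

/-- The space `l∞` of bounded complex sequences. -/
abbrev linf := lp (fun _ : ℕ => ℂ) ∞

/-- The space `l¹` of absolutely summable complex sequences. -/
abbrev lone := lp (fun _ : ℕ => ℂ) 1

/-- `T ∈ L(l∞)` is the adjoint of `S ∈ L(l¹)`: `⟪Tx, y⟫ = ⟪x, Sy⟫` for all `x, y`. -/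
def IsAdjointOf (T : linf →L[ℂ] linf) (S : lone →L[ℂ] lone) : Prop :=
  ∀ (x : linf) (y : lone), ∑' n, (T x) n * y n = ∑' n, x n * (S y) n

/-- `c₀`, the subspace of `l∞` of null sequences. -/
def c0 : Submodule ℂ linf where
  carrier := {x | Tendsto (fun n => x n) atTop (𝓝 (0 : ℂ))}
  add_mem' := by
    intro a b ha hb
    have h := ha.add hb
    simp only [Set.mem_setOf_eq] at *
    simpa [lp.coeFn_add, Pi.add_apply] using h
  zero_mem' := by
    simp only [Set.mem_setOf_eq]
    simpa [lp.coeFn_zero] using (tendsto_const_nhds : Tendsto (fun _ : ℕ => (0:ℂ)) atTop (𝓝 0))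
  smul_mem' := by
    intro c a ha
    simp only [Set.mem_setOf_eq] at *
    have h := ha.const_mul c
    simpa [lp.coeFn_smul, Pi.smul_apply, smul_eq_mul] using h

/-- if `T` is J-class and `M ⊆ A_T` is a closed `T`-invariant subspace with
`A_T \ M ≠ ∅`, then the induced operator `T̂` on `X/M` is J-class. -/
theorem stmt18 {X : Type*} [NormedAddCommGroup X] [NormedSpace ℂ X] [CompleteSpace X]
    (T : X →L[ℂ] X) (hT : JClass T)
    (M : Submodule ℂ X) (hMclosed : IsClosed (M : Set X))
    (hMinv : ∀ x ∈ M, T x ∈ M)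
    (hMsub : (M : Set X) ⊆ {x : X | JSet T x = Set.univ})
    (hne : ∃ x : X, JSet T x = Set.univ ∧ x ∉ M)
    (That : (X ⧸ M) →L[ℂ] (X ⧸ M))
    (hThat : ∀ x : X, That (Submodule.Quotient.mk x) = Submodule.Quotient.mk (T x)) :
    JClass That := by
  obtain ⟨x, hx, hxM⟩ := hne
  have hpow : ∀ (m : ℕ) (z : X),
      (That ^ m) (Submodule.Quotient.mk z) = Submodule.Quotient.mk ((T ^ m) z) := by
    intro m
    induction m with
    | zero => intro z; simp
    | succ n ih =>
      intro z
      rw [pow_succ, pow_succ]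
      simp only [ContinuousLinearMap.mul_apply]
      rw [hThat, ih]
  refine ⟨Submodule.Quotient.mk x, ?_, ?_⟩
  · simpa [Submodule.Quotient.mk_eq_zero] using hxM
  · ext q
    simp only [Set.mem_univ, iff_true]
    obtain ⟨y, rfl⟩ := Submodule.Quotient.mk_surjective M q
    have hy : y ∈ JSet T x := by rw [hx]; trivial
    obtain ⟨k, hk, u, hu, hTu⟩ := hy
    have hcont : Continuous (Submodule.Quotient.mk (p := M) : X → X ⧸ M) :=
      continuous_quot_mk
    refine ⟨k, hk, fun n => Submodule.Quotient.mk (u n), hcont.continuousAt.tendsto.comp hu, ?_⟩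
    have := hcont.continuousAt.tendsto.comp hTu
    simp only [hpow]; exact this

end JClassPaper
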